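/- Let H be a complex Hilbert space, R a selfadjoint unitary operator on H (so ρ(T) := R T R defines the twist), J an antiunitary operator with J∘J = ε·id (ε ∈ {1, −1}), and u a unitary operator satisfying u (J u J⁻¹) = (J u J⁻¹) u. Set U := u (J u J⁻¹). Then for every linear map D : H → H and all ψ, φ ∈ H: ⟨J(Uψ), R·((ρ(U) D U†)(Uφ))⟩ = ⟨Jψ, R(Dφ)⟩. That is, the bilinear form 𝔄_D(ψ,φ) := ⟨Jψ, Dφ⟩_ρ = ⟨Jψ, R(Dφ)⟩ is invariant under the simultaneous twisted gauge transformation D ↦ ρ(U) D U†, ψ ↦ Uψ. -/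

import Mathlib

open ContinuousLinearMap

local notation "⟪" x ", " y "⟫" => @inner ℂ _ _ x y

/-- Prop. 3.1 / gauge invariance of the twisted fermionic action:
With `R` a selfadjoint unitary (twist `ρ(T) = R T R`), `J` antiunitary with
`J∘J = ε·id`, `u` unitary satisfying the order-zero condition, and
`U = Ad(u) = u (J u J⁻¹)` with Hilbert adjoint `U†`, for every linear map
`D : H → H` and all `ψ, φ`:
`⟨J(Uψ), R ((ρ(U) D U†)(Uφ))⟩ = ⟨Jψ, R(Dφ)⟩`, i.e. the bilinear form
`𝔄_D(ψ,φ) = ⟨Jψ, Dφ⟩_ρ` is invariant under the twisted gauge transformation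
`D ↦ ρ(U) D U†`, `ψ ↦ Uψ`. -/
theorem stmt_5 {H : Type*} [NormedAddCommGroup H] [InnerProductSpace ℂ H]
    [CompleteSpace H] (R : H →L[ℂ] H)
    (hRsa : adjoint R = R) (hR2 : R ∘L R = 1)
    (J Jinv : H → H)
    (hJadd : ∀ x y, J (x + y) = J x + J y)
    (hJsmul : ∀ (c : ℂ) (x : H), J (c • x) = (starRingEnd ℂ c) • J x)
    (hJinner : ∀ ξ η, ⟪J ξ, J η⟫ = ⟪η, ξ⟫)
    (hJbij : Function.Bijective J)
    (hJinv1 : ∀ x, Jinv (J x) = x) (hJinv2 : ∀ x, J (Jinv x) = x)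
    (ε : ℂ) (hε : ε = 1 ∨ ε = -1)
    (hJJ : ∀ x, J (J x) = ε • x)
    (u : H →L[ℂ] H)
    (hu1 : adjoint u ∘L u = 1) (hu2 : u ∘L adjoint u = 1)
    (h0 : ∀ x, u (J (u (Jinv x))) = J (u (Jinv (u x))))
    (U : H → H) (hU : ∀ x, U x = u (J (u (Jinv x))))
    (Udag : H → H) (hUdag : ∀ x y, ⟪Udag x, y⟫ = ⟪x, U y⟫)
    (D : H →ₗ[ℂ] H) (ψ φ : H) :
    ⟪J (U ψ), R (R (U (R (D (Udag (U φ))))))⟫ = ⟪J ψ, R (D φ)⟫ := by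
  have hRR : ∀ y, R (R y) = y := fun y => by
    have := congrArg (fun T => T y) hR2; simpa using this
  have huin : ∀ x y : H, ⟪u x, u y⟫ = ⟪x, y⟫ := fun x y => by
    rw [← adjoint_inner_left]
    have := congrArg (fun T => T x) hu1
    simp only [comp_apply, one_apply] at this
    rw [this]
    rfl
  have hUin : ∀ x y : H, ⟪U x, U y⟫ = ⟪x, y⟫ := fun x y => by
    rw [hU, hU, huin, hJinner, huin, ← hJinner (Jinv x) (Jinv y), hJinv2, hJinv2]
  have hUdagU : ∀ x, Udag (U x) = x := fun x => by
    apply ext_inner_right ℂ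
    intro y
    rw [hUdag, hUin]
  have hεr : (starRingEnd ℂ) ε = ε := by rcases hε with h | h <;> simp [h]
  have hJinvsmul : ∀ (c : ℂ) (x : H), Jinv (c • x) = (starRingEnd ℂ c) • Jinv x := by
    intro c x
    have h : J ((starRingEnd ℂ c) • Jinv x) = c • x := by
      rw [hJsmul]; simp [hJinv2]
    rw [← h, hJinv1]
  have hJψ : J ψ = ε • Jinv ψ := by
    have h1 : J ψ = Jinv (ε • ψ) := by rw [← hJJ ψ, hJinv1]
    rw [h1, hJinvsmul, hεr]
  have key : ∀ x : H, ⟪J (U ψ), U x⟫ = ⟪J ψ, x⟫ := by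
    intro x
    rw [hU x, h0, hJinner, hU ψ, huin, ← hJinner (J (u (Jinv ψ))) (Jinv (u x)),
      hJinv2, hJJ, inner_smul_left, hεr, huin, hJψ, inner_smul_left, hεr]
  rw [hUdagU, hRR, key]
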